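/- Given three linearly independent rays r₀, r₁, r₂ ⊆ L⁺ from the origin in Minkowski 3-space and three positive numbers λ₀, λ₁, λ₂, there exist unique points uᵢ ∈ rᵢ (i = 0,1,2) such that √(−⟨uᵢ, uⱼ⟩) = λₖ whenever {i,j,k} = {0,1,2}. -/

import Mathlib

def mink (u v : Fin 3 → ℝ) : ℝ := u 0 * v 0 + u 1 * v 1 - u 2 * v 2

def Lpos : Set (Fin 3 → ℝ) := {u | mink u u = 0 ∧ 0 < u 2}

noncomputable def lam (u v : Fin 3 → ℝ) : ℝ := Real.sqrt (-(mink u v))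

lemma mink_smul (t s : ℝ) (u v : Fin 3 → ℝ) : mink (t • u) (s • v) = t * s * mink u v := by
  simp [mink]; ring

lemma mink_neg (u v : Fin 3 → ℝ) (hu : u ∈ Lpos) (hv : v ∈ Lpos)
    (hnp : ∀ c : ℝ, v ≠ c • u) : mink u v < 0 := by
  obtain ⟨hu1, hu2⟩ := hu
  obtain ⟨hv1, hv2⟩ := hv
  by_contra h
  push_neg at h
  have hu1' : u 0 * u 0 + u 1 * u 1 = u 2 * u 2 := by simp [mink] at hu1; linarith
  have hv1' : v 0 * v 0 + v 1 * v 1 = v 2 * v 2 := by simp [mink] at hv1; linarith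
  have h' : u 2 * v 2 ≤ u 0 * v 0 + u 1 * v 1 := by simp [mink] at h; linarith
  have key : u 0 * v 1 - u 1 * v 0 = 0 ∧ u 0 * v 0 + u 1 * v 1 = u 2 * v 2 := by
    constructor <;> nlinarith [sq_nonneg (u 0 * v 1 - u 1 * v 0), sq_nonneg (u 0 * v 0 + u 1 * v 1 - u 2 * v 2), mul_pos hu2 hv2, sq_nonneg (u 0 * v 0 + u 1 * v 1 + u 2 * v 2)]
  obtain ⟨k1, k2⟩ := key
  have hu2' : u 2 ≠ 0 := ne_of_gt hu2
  have e0 : v 0 * u 2 = v 2 * u 0 := by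
    have : u 2 * (v 0 * u 2) = u 2 * (v 2 * u 0) := by linear_combination (-(v 0)) * hu1' + u 0 * k2 + (-(u 1)) * k1
    exact mul_left_cancel₀ hu2' this
  have e1 : v 1 * u 2 = v 2 * u 1 := by
    have : u 2 * (v 1 * u 2) = u 2 * (v 2 * u 1) := by linear_combination (-(v 1)) * hu1' + u 1 * k2 + (u 0) * k1
    exact mul_left_cancel₀ hu2' this
  apply hnp (v 2 / u 2)
  funext i
  fin_cases i <;> simp [Pi.smul_apply] <;> field_simp <;> linarith [e0, e1]
theorem stmt1 (v₀ v₁ v₂ : Fin 3 → ℝ) (h₀ : v₀ ∈ Lpos) (h₁ : v₁ ∈ Lpos) (h₂ : v₂ ∈ Lpos)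
    (hli : LinearIndependent ℝ ![v₀, v₁, v₂])
    (l₀ l₁ l₂ : ℝ) (hl₀ : 0 < l₀) (hl₁ : 0 < l₁) (hl₂ : 0 < l₂) :
    ∃! u : Fin 3 → (Fin 3 → ℝ),
      ((∃ t > (0:ℝ), u 0 = t • v₀) ∧ (∃ t > (0:ℝ), u 1 = t • v₁) ∧ (∃ t > (0:ℝ), u 2 = t • v₂)) ∧
      lam (u 1) (u 2) = l₀ ∧ lam (u 0) (u 2) = l₁ ∧ lam (u 0) (u 1) = l₂ := by
  have np01 : ∀ c : ℝ, v₁ ≠ c • v₀ := by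
    intro c hc
    have := Fintype.linearIndependent_iff.mp hli ![c, -1, 0] ?_ 1
    · norm_num at this
    · simp [Fin.sum_univ_three, hc]
  have np02 : ∀ c : ℝ, v₂ ≠ c • v₀ := by
    intro c hc
    have := Fintype.linearIndependent_iff.mp hli ![c, 0, -1] ?_ 2
    · change (-1:ℝ) = 0 at this; norm_num at this
    · simp [Fin.sum_univ_three, hc]
  have np12 : ∀ c : ℝ, v₂ ≠ c • v₁ := by
    intro c hc
    have := Fintype.linearIndependent_iff.mp hli ![0, c, -1] ?_ 2
    · change (-1:ℝ) = 0 at this; norm_num at this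
    · simp [Fin.sum_univ_three, hc]
  set a : ℝ := -(mink v₀ v₁) with ha_def
  set b : ℝ := -(mink v₀ v₂) with hb_def
  set c : ℝ := -(mink v₁ v₂) with hc_def
  have ha : 0 < a := by have := mink_neg v₀ v₁ h₀ h₁ np01; linarith
  have hb : 0 < b := by have := mink_neg v₀ v₂ h₀ h₂ np02; linarith
  have hc : 0 < c := by have := mink_neg v₁ v₂ h₁ h₂ np12; linarith
  set t₀ : ℝ := Real.sqrt (l₁ ^ 2 * l₂ ^ 2 * c / (l₀ ^ 2 * a * b)) with ht₀_def
  have ht₀ : 0 < t₀ := Real.sqrt_pos.mpr (by positivity)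
  have ht₀sq : t₀ ^ 2 = l₁ ^ 2 * l₂ ^ 2 * c / (l₀ ^ 2 * a * b) := by
    rw [ht₀_def, Real.sq_sqrt (by positivity)]
  set t₁ : ℝ := l₂ ^ 2 / (t₀ * a) with ht₁_def
  set t₂ : ℝ := l₁ ^ 2 / (t₀ * b) with ht₂_def
  have ht₁ : 0 < t₁ := by positivity
  have ht₂ : 0 < t₂ := by positivity
  have eq01 : t₀ * t₁ * a = l₂ ^ 2 := by rw [ht₁_def]; field_simp
  have eq02 : t₀ * t₂ * b = l₁ ^ 2 := by rw [ht₂_def]; field_simp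
  have eq12 : t₁ * t₂ * c = l₀ ^ 2 := by
    rw [ht₁_def, ht₂_def]
    have h2 : t₀ ^ 2 * (l₀ ^ 2 * a * b) = l₁ ^ 2 * l₂ ^ 2 * c := by
      rw [ht₀sq]; field_simp
    field_simp
    nlinarith [h2]
  -- lam computations helper
  have lam_eq : ∀ (s r : ℝ) (w x : Fin 3 → ℝ) (l : ℝ), 0 < l → s * r * (-(mink w x)) = l ^ 2 →
      lam (s • w) (r • x) = l := by
    intro s r w x l hl hsr
    rw [lam, mink_smul]
    have : -(s * r * mink w x) = l ^ 2 := by linarith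
    rw [this, Real.sqrt_sq hl.le]
  refine ⟨![t₀ • v₀, t₁ • v₁, t₂ • v₂], ⟨⟨⟨t₀, ht₀, by simp⟩, ⟨t₁, ht₁, by simp⟩, ⟨t₂, ht₂, by simp⟩⟩, ?_, ?_, ?_⟩, ?_⟩
  · exact lam_eq t₁ t₂ v₁ v₂ l₀ hl₀ (by rw [← hc_def]; linarith [eq12])
  · exact lam_eq t₀ t₂ v₀ v₂ l₁ hl₁ (by rw [← hb_def]; linarith [eq02])
  · exact lam_eq t₀ t₁ v₀ v₁ l₂ hl₂ (by rw [← ha_def]; linarith [eq01])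
  · -- uniqueness
    rintro u ⟨⟨⟨s₀, hs₀, hu0⟩, ⟨s₁, hs₁, hu1⟩, ⟨s₂, hs₂, hu2⟩⟩, hL₀, hL₁, hL₂⟩
    have sq_of_lam : ∀ (s r : ℝ) (w x : Fin 3 → ℝ) (l : ℝ), 0 < s → 0 < r → 0 < -(mink w x) →
        lam (s • w) (r • x) = l → s * r * (-(mink w x)) = l ^ 2 := by
      intro s r w x l hs hr hm hlam
      have h1 : lam (s • w) (r • x) ^ 2 = s * r * (-(mink w x)) := by
        rw [lam, mink_smul, Real.sq_sqrt (by nlinarith [mul_pos (mul_pos hs hr) hm])]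
        ring
      rw [hlam] at h1; linarith
    have E12 : s₁ * s₂ * c = l₀ ^ 2 := by
      rw [hc_def]; exact sq_of_lam s₁ s₂ v₁ v₂ l₀ hs₁ hs₂ (by linarith) (by rw [← hu1, ← hu2]; exact hL₀)
    have E02 : s₀ * s₂ * b = l₁ ^ 2 := by
      rw [hb_def]; exact sq_of_lam s₀ s₂ v₀ v₂ l₁ hs₀ hs₂ (by linarith) (by rw [← hu0, ← hu2]; exact hL₁)
    have E01 : s₀ * s₁ * a = l₂ ^ 2 := by
      rw [ha_def]; exact sq_of_lam s₀ s₁ v₀ v₁ l₂ hs₀ hs₁ (by linarith) (by rw [← hu0, ← hu1]; exact hL₂)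
    -- derive s₀ = t₀
    have key : s₀ ^ 2 * (l₀ ^ 2 * a * b) = l₁ ^ 2 * l₂ ^ 2 * c := by
      linear_combination c * (s₀ * s₂ * b) * E01 + c * l₂ ^ 2 * E02 - s₀ ^ 2 * a * b * E12
    have hs0sq : s₀ ^ 2 = t₀ ^ 2 := by
      rw [ht₀sq]
      field_simp
      linear_combination key
    have hs0 : s₀ = t₀ := by
      have h := congrArg Real.sqrt hs0sq
      rwa [Real.sqrt_sq hs₀.le, Real.sqrt_sq ht₀.le] at h
    have hs1 : s₁ = t₁ := by
      rw [hs0] at E01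
      have h : s₁ * (t₀ * a) = t₁ * (t₀ * a) := by linear_combination E01 - eq01
      exact mul_right_cancel₀ (by positivity) h
    have hs2 : s₂ = t₂ := by
      rw [hs0] at E02
      have h : s₂ * (t₀ * b) = t₂ * (t₀ * b) := by linear_combination E02 - eq02
      exact mul_right_cancel₀ (by positivity) h
    funext i
    fin_cases i
    · simpa [hs0] using hu0
    · simpa [hs1] using hu1
    · simpa [hs2] using hu2
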